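/- arXiv:2507.21437 — 2 statements merged into one kernel-verified Lean document; each statement's English description precedes it below -/
import Mathlib

section
/- Fix x ∈ (0,1] and real α, β. Let u_ε denote the exact solution of ε u'' + u' + u = 0 with u(0) = α, u(1) = β (given by the explicit formula with λ₁, λ₂ as above). Then u_ε(x) → β·e^{1-x} as ε → 0⁺. -/
open Real Filter Set

lemma lam1_tendsto :
    Tendsto (fun ε : ℝ => (-1 + Real.sqrt (1 - 4 * ε)) / (2 * ε))
      (nhdsWithin 0 (Set.Ioo 0 (1/4))) (nhds (-1)) := by
  have h1 : Tendsto (fun ε : ℝ => -2 / (Real.sqrt (1 - 4 * ε) + 1))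
      (nhdsWithin 0 (Set.Ioo 0 (1/4))) (nhds (-1)) := by
    have hs : Tendsto (fun ε : ℝ => Real.sqrt (1 - 4 * ε) + 1)
        (nhdsWithin 0 (Set.Ioo 0 (1/4))) (nhds 2) := by
      have hc : ContinuousAt (fun ε : ℝ => Real.sqrt (1 - 4 * ε) + 1) 0 := by
        fun_prop
      have h : Tendsto (fun ε : ℝ => Real.sqrt (1 - 4 * ε) + 1)
          (nhdsWithin 0 (Set.Ioo 0 (1/4)))
          (nhds (Real.sqrt (1 - 4 * 0) + 1)) := hc.continuousWithinAt
      rw [show Real.sqrt (1 - 4 * (0:ℝ)) + 1 = 2 by norm_num] at h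
      exact h
    have := (tendsto_const_nhds (x := (-2:ℝ))).div hs (by norm_num)
    simpa [Pi.div_def] using this
  refine h1.congr' ?_
  filter_upwards [self_mem_nhdsWithin] with ε hε
  obtain ⟨hε0, hε4⟩ := hε
  have h4 : (0:ℝ) < 1 - 4 * ε := by linarith
  have hs : Real.sqrt (1 - 4 * ε) ^ 2 = 1 - 4 * ε := Real.sq_sqrt h4.le
  have hsp : 0 < Real.sqrt (1 - 4 * ε) + 1 := by positivity
  rw [div_eq_div_iff (by positivity : (0:ℝ) < Real.sqrt (1-4*ε)+1).ne' (by positivity : (0:ℝ) < 2 * ε).ne']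
  nlinarith [hs]

lemma lam2_tendsto :
    Tendsto (fun ε : ℝ => (-1 - Real.sqrt (1 - 4 * ε)) / (2 * ε))
      (nhdsWithin 0 (Set.Ioo 0 (1/4))) atBot := by
  apply tendsto_atBot_mono' _ (show ∀ᶠ ε in nhdsWithin (0:ℝ) (Set.Ioo 0 (1/4)),
      (-1 - Real.sqrt (1 - 4 * ε)) / (2 * ε) ≤ -1 / (2 * ε) from ?_)
  · -- -1/(2ε) → -∞
    have h : Tendsto (fun ε : ℝ => 2 * ε) (nhdsWithin 0 (Set.Ioo 0 (1/4)))
        (nhdsWithin 0 (Set.Ioi 0)) := by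
      rw [tendsto_nhdsWithin_iff]
      constructor
      · have : ContinuousAt (fun ε : ℝ => 2 * ε) 0 := by fun_prop
        simpa using this.continuousWithinAt.tendsto
      · filter_upwards [self_mem_nhdsWithin] with ε hε
        exact mul_pos two_pos hε.1
    have h2 : Tendsto (fun y : ℝ => -1 / y) (nhdsWithin 0 (Set.Ioi 0)) atBot := by
      have h3 : Tendsto (fun y : ℝ => y⁻¹) (nhdsWithin 0 (Set.Ioi 0)) atTop :=
        tendsto_inv_nhdsGT_zero
      refine (tendsto_neg_atTop_atBot.comp h3).congr fun y => ?_
      simp [Function.comp, neg_div]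
    exact h2.comp h
  · filter_upwards [self_mem_nhdsWithin] with ε hε
    have hε0 := hε.1
    apply div_le_div_of_nonneg_right ?_ (by linarith) |>.trans_eq rfl
    · have := Real.sqrt_nonneg (1 - 4 * ε)
      linarith

theorem stmt_3 (α β x : ℝ) (hx : x ∈ Set.Ioc (0 : ℝ) 1)
    (u : ℝ → ℝ → ℝ)
    (hu : ∀ ε x, u ε x =
      ((-α * Real.exp ((-1 - Real.sqrt (1 - 4 * ε)) / (2 * ε)) + β) /
        (Real.exp ((-1 + Real.sqrt (1 - 4 * ε)) / (2 * ε)) -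
          Real.exp ((-1 - Real.sqrt (1 - 4 * ε)) / (2 * ε)))) *
        Real.exp (((-1 + Real.sqrt (1 - 4 * ε)) / (2 * ε)) * x)
      + ((α * Real.exp ((-1 + Real.sqrt (1 - 4 * ε)) / (2 * ε)) - β) /
        (Real.exp ((-1 + Real.sqrt (1 - 4 * ε)) / (2 * ε)) -
          Real.exp ((-1 - Real.sqrt (1 - 4 * ε)) / (2 * ε)))) *
        Real.exp (((-1 - Real.sqrt (1 - 4 * ε)) / (2 * ε)) * x)) :
    Filter.Tendsto (fun ε : ℝ => u ε x)
      (nhdsWithin 0 (Set.Ioo 0 (1/4))) (nhds (β * Real.exp (1 - x))) := by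
  have hl1 := lam1_tendsto
  have hl2 := lam2_tendsto
  set l := nhdsWithin (0:ℝ) (Set.Ioo 0 (1/4))
  have he1 : Tendsto (fun ε : ℝ => Real.exp ((-1 + Real.sqrt (1 - 4 * ε)) / (2 * ε)))
      l (nhds (Real.exp (-1))) := (Real.continuous_exp.continuousAt.tendsto).comp hl1
  have he2 : Tendsto (fun ε : ℝ => Real.exp ((-1 - Real.sqrt (1 - 4 * ε)) / (2 * ε)))
      l (nhds 0) := Real.tendsto_exp_atBot.comp hl2
  have he1x : Tendsto (fun ε : ℝ => Real.exp (((-1 + Real.sqrt (1 - 4 * ε)) / (2 * ε)) * x))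
      l (nhds (Real.exp (-x))) := by
    have : Tendsto (fun ε : ℝ => ((-1 + Real.sqrt (1 - 4 * ε)) / (2 * ε)) * x)
        l (nhds (-x)) := by simpa using hl1.mul_const x
    exact (Real.continuous_exp.continuousAt.tendsto).comp this
  have he2x : Tendsto (fun ε : ℝ => Real.exp (((-1 - Real.sqrt (1 - 4 * ε)) / (2 * ε)) * x))
      l (nhds 0) := by
    have : Tendsto (fun ε : ℝ => ((-1 - Real.sqrt (1 - 4 * ε)) / (2 * ε)) * x)
        l atBot := hl2.atBot_mul_const hx.1
    exact Real.tendsto_exp_atBot.comp this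
  have hden : Tendsto (fun ε : ℝ => Real.exp ((-1 + Real.sqrt (1 - 4 * ε)) / (2 * ε)) -
      Real.exp ((-1 - Real.sqrt (1 - 4 * ε)) / (2 * ε))) l (nhds (Real.exp (-1) - 0)) :=
    he1.sub he2
  have hne : Real.exp (-1) - 0 ≠ 0 := by
    simp [Real.exp_ne_zero]
  have hnum1 : Tendsto (fun ε : ℝ => -α * Real.exp ((-1 - Real.sqrt (1 - 4 * ε)) / (2 * ε)) + β)
      l (nhds (-α * 0 + β)) := ((tendsto_const_nhds.mul he2).add tendsto_const_nhds)
  have hnum2 : Tendsto (fun ε : ℝ => α * Real.exp ((-1 + Real.sqrt (1 - 4 * ε)) / (2 * ε)) - β)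
      l (nhds (α * Real.exp (-1) - β)) := ((tendsto_const_nhds.mul he1).sub tendsto_const_nhds)
  have hmain := (((hnum1.div hden hne).mul he1x).add ((hnum2.div hden hne).mul he2x))
  have heq : (-α * 0 + β) / (Real.exp (-1) - 0) * Real.exp (-x) +
      (α * Real.exp (-1) - β) / (Real.exp (-1) - 0) * 0 = β * Real.exp (1 - x) := by
    have hE : Real.exp (-x) = Real.exp (1 - x) * Real.exp (-1) := by
      rw [← Real.exp_add]; ring_nf
    simp only [mul_zero, neg_mul, neg_zero, zero_add, add_zero, sub_zero]
    rw [hE]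
    field_simp
  rw [heq] at hmain
  apply hmain.congr
  intro ε
  rw [hu]
  simp only [Pi.div_apply]
end

section
/- Fix real α, β, and let u_ε be the exact solution of the constant-coefficient problem ε u'' + u' + u = 0, u(0) = α, u(1) = β. Then for the composite approximation u_c(x) = βe^{1-x} + (α - βe)e^{-x/ε}, the pointwise error satisfies u_ε(x) - u_c(x) → 0 as ε → 0⁺, for every fixed x ∈ [0,1]. -/
open Filter Real Set

theorem stmt_9 (α β x : ℝ) (hx : x ∈ Set.Icc (0 : ℝ) 1)
    (u : ℝ → ℝ → ℝ)
    (hu : ∀ ε x, u ε x =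
      ((-α * Real.exp ((-1 - Real.sqrt (1 - 4 * ε)) / (2 * ε)) + β) /
        (Real.exp ((-1 + Real.sqrt (1 - 4 * ε)) / (2 * ε)) -
          Real.exp ((-1 - Real.sqrt (1 - 4 * ε)) / (2 * ε)))) *
        Real.exp (((-1 + Real.sqrt (1 - 4 * ε)) / (2 * ε)) * x)
      + ((α * Real.exp ((-1 + Real.sqrt (1 - 4 * ε)) / (2 * ε)) - β) /
        (Real.exp ((-1 + Real.sqrt (1 - 4 * ε)) / (2 * ε)) -
          Real.exp ((-1 - Real.sqrt (1 - 4 * ε)) / (2 * ε)))) *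
        Real.exp (((-1 - Real.sqrt (1 - 4 * ε)) / (2 * ε)) * x))
    (uc : ℝ → ℝ → ℝ)
    (huc : ∀ ε x, uc ε x = β * Real.exp (1 - x) + (α - β * Real.exp 1) * Real.exp (-x / ε)) :
    Filter.Tendsto (fun ε : ℝ => u ε x - uc ε x)
      (nhdsWithin 0 (Set.Ioo 0 (1/4))) (nhds 0) := by
  set l := nhdsWithin (0:ℝ) (Set.Ioo 0 (1/4)) with hl
  have hmem : Set.Ioo (0:ℝ) (1/4) ∈ l := self_mem_nhdsWithin
  -- sqrt limit
  have hs : Tendsto (fun ε : ℝ => Real.sqrt (1 - 4*ε)) l (nhds 1) := by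
    have hc : Continuous fun ε : ℝ => Real.sqrt (1 - 4*ε) := by continuity
    have h : Tendsto (fun ε : ℝ => Real.sqrt (1 - 4*ε)) l (nhds (Real.sqrt (1 - 4*0))) :=
      (hc.tendsto 0).mono_left nhdsWithin_le_nhds
    simpa using h
  -- λ₁ → -1
  have hlam1 : Tendsto (fun ε : ℝ => (-1 + Real.sqrt (1 - 4*ε)) / (2*ε)) l (nhds (-1)) := by
    have h2 : Tendsto (fun ε : ℝ => -2 / (Real.sqrt (1 - 4*ε) + 1)) l (nhds (-1)) := by
      have hden := hs.add_const 1
      have := (tendsto_const_nhds (f := l) (x := (-2:ℝ))).div hden (by norm_num)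
      norm_num at this
      exact this
    refine h2.congr' ?_
    filter_upwards [hmem] with ε hε
    obtain ⟨hε0, hε4⟩ := hε
    have h1 : (0:ℝ) ≤ 1 - 4*ε := by linarith
    have hsq : Real.sqrt (1-4*ε) ^ 2 = 1 - 4*ε := Real.sq_sqrt h1
    have hsn : (0:ℝ) < Real.sqrt (1-4*ε) + 1 := by positivity
    field_simp
    nlinarith [hsq]
  -- ε⁻¹ → ∞
  have hinv : Tendsto (fun ε : ℝ => ε⁻¹) l atTop := by
    refine tendsto_inv_nhdsGT_zero.mono_left (nhdsWithin_mono 0 ?_)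
    exact Set.Ioo_subset_Ioi_self
  -- λ₂ → -∞
  have hlam2 : Tendsto (fun ε : ℝ => (-1 - Real.sqrt (1 - 4*ε)) / (2*ε)) l atBot := by
    have hb : Tendsto (fun ε : ℝ => -(2:ℝ)⁻¹ * ε⁻¹) l atBot :=
      hinv.const_mul_atTop_of_neg (by norm_num)
    refine tendsto_atBot_mono' l ?_ hb
    filter_upwards [hmem] with ε hε
    obtain ⟨hε0, hε4⟩ := hε
    have hs0 : (0:ℝ) ≤ Real.sqrt (1-4*ε) := Real.sqrt_nonneg _
    rw [div_le_iff₀ (by linarith : (0:ℝ) < 2*ε)]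
    have : -(2:ℝ)⁻¹ * ε⁻¹ * (2*ε) = -1 := by field_simp
    rw [this]; linarith
  have hlam2e : Tendsto (fun ε : ℝ => Real.exp ((-1 - Real.sqrt (1 - 4*ε)) / (2*ε))) l (nhds 0) :=
    Real.tendsto_exp_atBot.comp hlam2
  -- exp(λ₁ x) → exp(-x)
  have hE1 : Tendsto (fun ε : ℝ => Real.exp ((-1 + Real.sqrt (1 - 4*ε)) / (2*ε) * x)) l
      (nhds (Real.exp (-x))) := by
    have := (Real.continuous_exp.tendsto (-1*x)).comp (hlam1.mul_const x)
    simpa [Function.comp_def] using this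
  -- coefficients
  have hden : Tendsto (fun ε : ℝ => Real.exp ((-1 + Real.sqrt (1 - 4*ε)) / (2*ε)) -
      Real.exp ((-1 - Real.sqrt (1 - 4*ε)) / (2*ε))) l (nhds (Real.exp (-1))) := by
    have h1 := (Real.continuous_exp.tendsto (-1)).comp hlam1
    have := h1.sub hlam2e
    simpa using this
  have hdne : Real.exp (-1) ≠ 0 := (Real.exp_pos _).ne'
  have hA : Tendsto (fun ε : ℝ => (-α * Real.exp ((-1 - Real.sqrt (1 - 4*ε)) / (2*ε)) + β) /
      (Real.exp ((-1 + Real.sqrt (1 - 4*ε)) / (2*ε)) -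
        Real.exp ((-1 - Real.sqrt (1 - 4*ε)) / (2*ε)))) l (nhds (β * Real.exp 1)) := by
    have hnum : Tendsto (fun ε : ℝ => -α * Real.exp ((-1 - Real.sqrt (1 - 4*ε)) / (2*ε)) + β)
        l (nhds β) := by
      have := (hlam2e.const_mul (-α)).add_const β
      simpa using this
    have := hnum.div hden hdne
    have heq : β / Real.exp (-1) = β * Real.exp 1 := by
      rw [Real.exp_neg]; field_simp
    rwa [heq] at this
  have hB : Tendsto (fun ε : ℝ => (α * Real.exp ((-1 + Real.sqrt (1 - 4*ε)) / (2*ε)) - β) /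
      (Real.exp ((-1 + Real.sqrt (1 - 4*ε)) / (2*ε)) -
        Real.exp ((-1 - Real.sqrt (1 - 4*ε)) / (2*ε)))) l (nhds (α - β * Real.exp 1)) := by
    have hnum : Tendsto (fun ε : ℝ => α * Real.exp ((-1 + Real.sqrt (1 - 4*ε)) / (2*ε)) - β)
        l (nhds (α * Real.exp (-1) - β)) :=
      (((Real.continuous_exp.tendsto (-1)).comp hlam1).const_mul α).sub_const β
    have := hnum.div hden hdne
    have heq : (α * Real.exp (-1) - β) / Real.exp (-1) = α - β * Real.exp 1 := by
      rw [Real.exp_neg]; field_simp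
    rwa [heq] at this
  simp only [hu, huc]
  rcases eq_or_lt_of_le hx.1 with hx0 | hx0
  · -- x = 0
    subst hx0
    have h : Tendsto (fun ε : ℝ =>
        ((-α * Real.exp ((-1 - Real.sqrt (1 - 4*ε)) / (2*ε)) + β) /
          (Real.exp ((-1 + Real.sqrt (1 - 4*ε)) / (2*ε)) -
            Real.exp ((-1 - Real.sqrt (1 - 4*ε)) / (2*ε))) +
         (α * Real.exp ((-1 + Real.sqrt (1 - 4*ε)) / (2*ε)) - β) /
          (Real.exp ((-1 + Real.sqrt (1 - 4*ε)) / (2*ε)) -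
            Real.exp ((-1 - Real.sqrt (1 - 4*ε)) / (2*ε)))) - α)
        l (nhds (β * Real.exp 1 + (α - β * Real.exp 1) - α)) := (hA.add hB).sub_const α
    have hz : β * Real.exp 1 + (α - β * Real.exp 1) - α = 0 := by ring
    rw [hz] at h
    refine h.congr fun ε => ?_
    simp [Real.exp_zero]
  · -- x > 0
    have hlam2x : Tendsto (fun ε : ℝ => Real.exp ((-1 - Real.sqrt (1 - 4*ε)) / (2*ε) * x)) l
        (nhds 0) := Real.tendsto_exp_atBot.comp (hlam2.atBot_mul_const hx0)
    have hbl : Tendsto (fun ε : ℝ => Real.exp (-x / ε)) l (nhds 0) := by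
      have h1 : Tendsto (fun ε : ℝ => -x * ε⁻¹) l atBot :=
        hinv.const_mul_atTop_of_neg (by linarith)
      have := Real.tendsto_exp_atBot.comp h1
      refine this.congr fun ε => ?_
      simp [Function.comp, div_eq_mul_inv, neg_mul]
    have h : Tendsto (fun ε : ℝ =>
        ((-α * Real.exp ((-1 - Real.sqrt (1 - 4*ε)) / (2*ε)) + β) /
          (Real.exp ((-1 + Real.sqrt (1 - 4*ε)) / (2*ε)) -
            Real.exp ((-1 - Real.sqrt (1 - 4*ε)) / (2*ε))) *
          Real.exp ((-1 + Real.sqrt (1 - 4*ε)) / (2*ε) * x) +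
         (α * Real.exp ((-1 + Real.sqrt (1 - 4*ε)) / (2*ε)) - β) /
          (Real.exp ((-1 + Real.sqrt (1 - 4*ε)) / (2*ε)) -
            Real.exp ((-1 - Real.sqrt (1 - 4*ε)) / (2*ε))) *
          Real.exp ((-1 - Real.sqrt (1 - 4*ε)) / (2*ε) * x) -
         (β * Real.exp (1 - x) + (α - β * Real.exp 1) * Real.exp (-x / ε))))
        l (nhds (β * Real.exp 1 * Real.exp (-x) + (α - β * Real.exp 1) * 0 -
          (β * Real.exp (1 - x) + (α - β * Real.exp 1) * 0))) :=
      ((hA.mul hE1).add (hB.mul hlam2x)).sub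
        ((tendsto_const_nhds.add (hbl.const_mul _)).congr fun ε => by ring)
    have hz : β * Real.exp 1 * Real.exp (-x) + (α - β * Real.exp 1) * 0 -
        (β * Real.exp (1 - x) + (α - β * Real.exp 1) * 0) = 0 := by
      have he : Real.exp (1-x) = Real.exp 1 * Real.exp (-x) := by
        rw [← Real.exp_add]; ring_nf
      rw [he]; ring
    rw [hz] at h
    exact h
end
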